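/- Space lower bound for top-1 LCP data structures (information-theoretic core): let Σ be a finite alphabet of size σ, and let N ≤ σ^L. Suppose D is a function from the N-element subsets of Σ^L to Fin M (i.e., data structure states encoded in M possible values) and A : Fin M → Σ^L → ℕ is an answer function such that for every N-element subset S of Σ^L and every query q ∈ Σ^L, A (D S) q = max over s ∈ S of LCP(q,s). Then D is injective, and consequently M ≥ C(σ^L, N). -/
import Mathlib


/-- The length of the longest common prefix of two sequences `s t : Fin L → Alph`:
the largest `j ∈ {0,…,L}` such that `s i = t i` for all `i < j`. -/
def LCP {Alph : Type*} [DecidableEq Alph] {L : ℕ} (s t : Fin L → Alph) : ℕ :=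
  Nat.findGreatest (fun j => ∀ i : Fin L, (i : ℕ) < j → s i = t i) L

/-- Information-theoretic space lower bound for top-1 LCP data structures:
any encoding `D` of `N`-element datasets into `M` states that admits an answer
function `A` computing the maximal LCP for every query is injective, hence
`M ≥ C(σ^L, N)`. -/
theorem space_lower_bound {Alph : Type*} [Fintype Alph] [DecidableEq Alph]
    {L σ N M : ℕ} (hσ : Fintype.card Alph = σ) (hN : N ≤ σ ^ L)
    (D : {S : Finset (Fin L → Alph) // S.card = N} → Fin M)
    (A : Fin M → (Fin L → Alph) → ℕ)
    (hA : ∀ (S : {S : Finset (Fin L → Alph) // S.card = N}) (q : Fin L → Alph),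
        A (D S) q = S.1.sup (fun s => LCP q s)) :
    Function.Injective D ∧ (σ ^ L).choose N ≤ M := by
  have hLCP_self : ∀ q : Fin L → Alph, LCP q q = L := by
    intro q
    refine le_antisymm (Nat.findGreatest_le L) ?_
    exact Nat.le_findGreatest le_rfl (fun i _ => rfl)
  have hLCP_eq : ∀ q s : Fin L → Alph, LCP q s = L → q = s := by
    intro q s h
    rcases Nat.eq_zero_or_pos L with hL | hL
    · funext i; exact absurd (i.2.trans_le hL.le) (Nat.not_lt_zero _)
    · rw [LCP, Nat.findGreatest_eq_iff] at h
      have := h.2.1 hL.ne'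
      funext i
      exact this i i.2
  have hinj : Function.Injective D := by
    intro S₁ S₂ hD
    by_contra hne
    have hne' : S₁.1 ≠ S₂.1 := fun h => hne (Subtype.ext h)
    -- there is q in one not the other; wlog
    have key : ∀ (T₁ T₂ : {S : Finset (Fin L → Alph) // S.card = N}), D T₁ = D T₂ →
        ∀ q ∈ T₁.1, q ∈ T₂.1 := by
      intro T₁ T₂ hDT q hq
      have hsup1 : A (D T₁) q = L := by
        rw [hA]
        refine le_antisymm (Finset.sup_le fun s _ => Nat.findGreatest_le L) ?_
        calc L = LCP q q := (hLCP_self q).symm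
          _ ≤ T₁.1.sup (fun s => LCP q s) := Finset.le_sup hq
      have hsup2 : T₂.1.sup (fun s => LCP q s) = L := by
        rw [← hA, ← hDT, hsup1]
      have hT₂ne : T₂.1.Nonempty := by
        rw [← Finset.card_pos, T₂.2, ← T₁.2, Finset.card_pos]
        exact ⟨q, hq⟩
      obtain ⟨s, hs, hse⟩ := Finset.exists_mem_eq_sup T₂.1 hT₂ne (fun s => LCP q s)
      have : q = s := hLCP_eq q s (by rw [← hse, hsup2])
      exact this ▸ hs
    exact hne (Subtype.ext (Finset.Subset.antisymm (key S₁ S₂ hD) (key S₂ S₁ hD.symm)))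
  refine ⟨hinj, ?_⟩
  have hcard : Fintype.card {S : Finset (Fin L → Alph) // S.card = N} = (σ ^ L).choose N := by
    rw [Fintype.card_finset_len, Fintype.card_fun, hσ, Fintype.card_fin]
  calc (σ ^ L).choose N = Fintype.card {S : Finset (Fin L → Alph) // S.card = N} := hcard.symm
    _ ≤ Fintype.card (Fin M) := Fintype.card_le_of_injective D hinj
    _ = M := Fintype.card_fin M
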